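/- Let 1/2 < H < 1 and let u, v ∈ ℝ with u ≠ v and max(u,v) < 1. Then ∫_{max(u,v)}^{1} (s-u)^{H-3/2}·(s-v)^{H-3/2} ds < B(H-1/2, 2-2H) · |u-v|^{2H-2}. -/

import Mathlib

open MeasureTheory Set

/-- The Euler Beta function `B(a,b) = Γ(a)Γ(b)/Γ(a+b)`. -/
noncomputable def eulerBeta (a b : ℝ) : ℝ := Real.Gamma a * Real.Gamma b / Real.Gamma (a + b)

lemma eulerBeta_eq_integral (a b : ℝ) (ha : 0 < a) (hb : 0 < b) :
    eulerBeta a b = ∫ x in (0:ℝ)..1, x ^ (a - 1) * (1 - x) ^ (b - 1) := by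
  set R : ℝ := ∫ x in (0:ℝ)..1, x ^ (a - 1) * (1 - x) ^ (b - 1) with hR
  have hc : Complex.betaIntegral a b = (R : ℂ) := by
    rw [hR, ← intervalIntegral.integral_ofReal, Complex.betaIntegral]
    refine intervalIntegral.integral_congr fun x hx => ?_
    rw [uIcc_of_le zero_le_one] at hx
    rw [Complex.ofReal_mul, Complex.ofReal_cpow hx.1, Complex.ofReal_cpow (by linarith [hx.2])]
    push_cast
    ring
  have h := Complex.Gamma_mul_Gamma_eq_betaIntegral (s := (a:ℂ)) (t := (b:ℂ))
      (by simpa using ha) (by simpa using hb)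
  rw [hc, ← Complex.ofReal_add, Complex.Gamma_ofReal, Complex.Gamma_ofReal,
    Complex.Gamma_ofReal, ← Complex.ofReal_mul, ← Complex.ofReal_mul] at h
  have h' : Real.Gamma a * Real.Gamma b = Real.Gamma (a + b) * R := by exact_mod_cast h
  have hG : Real.Gamma (a + b) ≠ 0 := (Real.Gamma_pos_of_pos (by linarith)).ne'
  rw [eulerBeta, h']
  field_simp

lemma key (H u v : ℝ) (hH : H ∈ Ioo (1 / 2 : ℝ) 1) (huv : u < v) (h1 : v < 1) :
    (∫ s in v..1, (s - u) ^ (H - 3 / 2) * (s - v) ^ (H - 3 / 2))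
      < eulerBeta (H - 1 / 2) (2 - 2 * H) * (v - u) ^ (2 * H - 2) := by
  obtain ⟨hH1, hH2⟩ := hH
  set d := v - u with hd
  have hdpos : 0 < d := sub_pos.mpr huv
  set c := (1 - v) / (1 - u) with hc
  have hu1 : u < 1 := by linarith
  have hcpos : 0 < c := div_pos (by linarith) (by linarith)
  have hc1 : c < 1 := (div_lt_one (by linarith)).mpr (by linarith)
  have h1u0 : (1:ℝ) - u ≠ 0 := by linarith
  have h1c : 1 - c = d / (1 - u) := by rw [hc, hd]; field_simp; ring
  set g : ℝ → ℝ := fun x => x ^ (H - 3 / 2) * (1 - x) ^ (1 - 2 * H) with hg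
  set φ : ℝ → ℝ := fun x => v + d * (x / (1 - x)) with hφ
  -- basic facts about φ on Ioo 0 c
  have hmono : ∀ x y : ℝ, 0 ≤ x → x < y → y < 1 → φ x < φ y := by
    intro x y hx hxy hy1
    have h1 : x / (1 - x) < y / (1 - y) := by
      rw [div_lt_div_iff₀ (by linarith) (by linarith)]
      nlinarith
    simp only [hφ]
    nlinarith
  have hφ0 : φ 0 = v := by simp [hφ]
  have hφc : φ c = 1 := by
    have h1u : (1:ℝ) - u ≠ 0 := by intro h; rw [sub_eq_zero] at h; first | (simp only [id_eq] at h; linarith) | linarith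
    have hdne : d ≠ 0 := hdpos.ne'
    simp only [hφ, h1c, hc, hd] at *
    rw [h1c]
    field_simp
    all_goals ring
  have hmem : ∀ x ∈ Ioo (0:ℝ) c, φ x ∈ Ioo v 1 := by
    intro x hx
    constructor
    · have := hmono 0 x le_rfl hx.1 (lt_trans hx.2 hc1); rwa [hφ0] at this
    · have := hmono x c (le_of_lt hx.1) hx.2 hc1; rwa [hφc] at this
  have hcont : ContinuousOn φ (Icc 0 c) := by
    apply continuousOn_const.add (continuousOn_const.mul ?_)
    apply continuousOn_id.div (continuousOn_const.sub continuousOn_id)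
    intro x hx
    have : x < 1 := lt_of_le_of_lt hx.2 hc1
    intro h; simp only [Pi.sub_apply, id_eq] at h; linarith
  have himg : φ '' Ioo 0 c = Ioo v 1 := by
    apply Subset.antisymm
    · rintro _ ⟨x, hx, rfl⟩; exact hmem x hx
    · have := intermediate_value_Ioo (le_of_lt hcpos) hcont
      rw [hφ0, hφc] at this
      exact this
  have hderiv : ∀ x ∈ Ioo (0:ℝ) c, HasDerivWithinAt φ (d / (1 - x) ^ 2) (Ioo 0 c) x := by
    intro x hx
    have hx1 : x < 1 := lt_trans hx.2 hc1
    have h1x : (1:ℝ) - x ≠ 0 := by intro h; rw [sub_eq_zero] at h; first | (simp only [id_eq] at h; linarith) | linarith [h]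
    have h1 : HasDerivAt (fun y : ℝ => y / (1 - y)) ((1 * (1 - x) - x * (0 - 1)) / (1 - x) ^ 2) x :=
      (hasDerivAt_id x).div ((hasDerivAt_const x (1:ℝ)).sub (hasDerivAt_id x)) h1x
    have h2 : HasDerivAt φ (d / (1 - x) ^ 2) x := by
      have := (h1.const_mul d).const_add v
      exact this.congr_deriv (by ring)
    exact h2.hasDerivWithinAt
  have hinj : InjOn φ (Ioo 0 c) := by
    intro x hx y hy hxy
    rcases lt_trichotomy x y with h | h | h
    · exact absurd hxy (ne_of_lt (hmono x y (le_of_lt hx.1) h (lt_trans hy.2 hc1)))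
    · exact h
    · exact absurd hxy.symm (ne_of_lt (hmono y x (le_of_lt hy.1) h (lt_trans hx.2 hc1)))
  -- change of variables
  have hcv : ∫ s in Ioo v 1, (s - u) ^ (H - 3 / 2) * (s - v) ^ (H - 3 / 2)
      = ∫ x in Ioo (0:ℝ) c, |d / (1 - x) ^ 2| •
          ((φ x - u) ^ (H - 3 / 2) * (φ x - v) ^ (H - 3 / 2)) := by
    rw [← himg]
    exact MeasureTheory.integral_image_eq_integral_abs_deriv_smul measurableSet_Ioo hderiv hinj _
  -- pointwise identity
  have hpt : ∀ x ∈ Ioo (0:ℝ) c, |d / (1 - x) ^ 2| •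
      ((φ x - u) ^ (H - 3 / 2) * (φ x - v) ^ (H - 3 / 2)) = d ^ (2 * H - 2) * g x := by
    intro x hx
    have hxpos : 0 < x := hx.1
    have hx1 : x < 1 := lt_trans hx.2 hc1
    have h1x : (0:ℝ) < 1 - x := by linarith
    have e1 : φ x - u = d / (1 - x) := by
      simp only [hφ, hd]; field_simp; ring
    have e2 : φ x - v = d * x / (1 - x) := by
      simp only [hφ]; field_simp; ring
    have habs : |d / (1 - x) ^ 2| = d / (1 - x) ^ 2 :=
      abs_of_pos (div_pos hdpos (by positivity))
    rw [e1, e2]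
    simp only [hg, smul_eq_mul, habs]
    rw [Real.div_rpow hdpos.le h1x.le, Real.div_rpow (by positivity) h1x.le,
      Real.mul_rpow hdpos.le hxpos.le]
    rw [show (2 * H - 2 : ℝ) = 1 + (H - 3/2) + (H - 3/2) by ring,
      Real.rpow_add hdpos, Real.rpow_add hdpos, Real.rpow_one,
      show (1 - 2 * H : ℝ) = -((2:ℝ) + (H - 3/2) + (H - 3/2)) by ring,
      Real.rpow_neg h1x.le, Real.rpow_add h1x, Real.rpow_add h1x]
    have : (1 - x) ^ ((2:ℝ)) = (1 - x) ^ (2:ℕ) := by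
      rw [← Real.rpow_natCast]; norm_num
    rw [this]
    have hne1 : (1 - x) ^ (H - 3/2) ≠ 0 := (Real.rpow_pos_of_pos h1x _).ne'
    field_simp
  -- rewrite LHS
  have hLHS : (∫ s in v..1, (s - u) ^ (H - 3 / 2) * (s - v) ^ (H - 3 / 2))
      = d ^ (2 * H - 2) * ∫ x in (0:ℝ)..c, g x := by
    rw [intervalIntegral.integral_of_le (le_of_lt h1), MeasureTheory.integral_Ioc_eq_integral_Ioo,
      hcv, MeasureTheory.setIntegral_congr_fun measurableSet_Ioo hpt,
      MeasureTheory.integral_const_mul, intervalIntegral.integral_of_le hcpos.le,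
      MeasureTheory.integral_Ioc_eq_integral_Ioo]
  -- integrability
  have hIg1 : IntervalIntegrable g volume 0 c := by
    apply IntervalIntegrable.mul_continuousOn (intervalIntegral.intervalIntegrable_rpow' (by linarith))
    apply ContinuousOn.rpow_const (continuousOn_const.sub continuousOn_id)
    intro x hx
    rw [uIcc_of_le hcpos.le] at hx
    left
    have : x < 1 := lt_of_le_of_lt hx.2 hc1
    intro h; simp only [Pi.sub_apply, id_eq] at h; linarith
  have hIg2 : IntervalIntegrable g volume c 1 := by
    have h0 : IntervalIntegrable (fun x : ℝ => x ^ (1 - 2 * H)) volume 0 (1 - c) :=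
      intervalIntegral.intervalIntegrable_rpow' (by linarith)
    have h1' := h0.comp_sub_left 1
    simp only [sub_zero, sub_sub_cancel] at h1'
    apply IntervalIntegrable.continuousOn_mul h1'.symm
    apply ContinuousOn.rpow_const (continuousOn_id)
    intro x hx
    rw [uIcc_of_le hc1.le] at hx
    left
    exact (lt_of_lt_of_le hcpos hx.1).ne'
  have hpos2 : 0 < ∫ x in c..1, g x := by
    apply intervalIntegral.intervalIntegral_pos_of_pos_on hIg2 _ hc1
    intro x hx
    have : 0 < x := lt_trans hcpos hx.1
    have : (0:ℝ) < 1 - x := by linarith [hx.2]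
    positivity
  have hsplit : (∫ x in (0:ℝ)..1, g x) = (∫ x in (0:ℝ)..c, g x) + ∫ x in c..1, g x :=
    (intervalIntegral.integral_add_adjacent_intervals hIg1 hIg2).symm
  -- beta value
  have hbeta : eulerBeta (H - 1 / 2) (2 - 2 * H) = ∫ x in (0:ℝ)..1, g x := by
    rw [eulerBeta_eq_integral _ _ (by linarith) (by linarith)]
    simp only [hg, show H - 1/2 - 1 = H - 3/2 by ring, show 2 - 2*H - 1 = 1 - 2*H by ring]
  rw [hLHS, hbeta, hsplit, mul_comm (_ + _)]
  have hdp : 0 < d ^ (2 * H - 2) := Real.rpow_pos_of_pos hdpos _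
  nlinarith [mul_pos hdp hpos2]

/-- For `1/2 < H < 1`, `u ≠ v`, `max u v < 1`,
`∫_{max u v}^1 (s-u)^(H-3/2) (s-v)^(H-3/2) ds < B(H-1/2, 2-2H) |u-v|^(2H-2)`. -/
theorem stmt8 (H u v : ℝ) (hH : H ∈ Ioo (1 / 2 : ℝ) 1) (huv : u ≠ v)
    (h1 : max u v < 1) :
    (∫ s in (max u v)..1, (s - u) ^ (H - 3 / 2) * (s - v) ^ (H - 3 / 2))
      < eulerBeta (H - 1 / 2) (2 - 2 * H) * |u - v| ^ (2 * H - 2) := by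
  rcases lt_or_gt_of_ne huv with h | h
  · rw [max_eq_right h.le] at h1 ⊢
    rw [show |u - v| = v - u by rw [abs_sub_comm]; exact abs_of_pos (by linarith)]
    exact key H u v hH h h1
  · rw [max_eq_left h.le] at h1 ⊢
    rw [show |u - v| = u - v from abs_of_pos (by linarith)]
    calc (∫ s in u..1, (s - u) ^ (H - 3 / 2) * (s - v) ^ (H - 3 / 2))
        = ∫ s in u..1, (s - v) ^ (H - 3 / 2) * (s - u) ^ (H - 3 / 2) := by
          simp_rw [mul_comm]
      _ < _ := key H v u hH h h1
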